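/- For every bounded symmetric measurable kernel W : [0,1]² → ℝ, the operator norm of the associated integral operator T_W is at most four times the cut norm of W, i.e. ‖T_W‖_op ≤ 4‖W‖_□. -/

import Mathlib

open MeasureTheory

/-- Cut norm of a kernel on [0,1]²: supremum over Borel subsets `B₁, B₂ ⊆ [0,1]`
of `|∫_{B₁×B₂} W(u,v) du dv|`. -/
noncomputable def cutNorm (W : ℝ → ℝ → ℝ) : ℝ :=
  sSup { x | ∃ B₁ B₂ : Set ℝ, MeasurableSet B₁ ∧ MeasurableSet B₂ ∧
    B₁ ⊆ Set.Icc 0 1 ∧ B₂ ⊆ Set.Icc 0 1 ∧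
    x = |∫ u in B₁, ∫ v in B₂, W u v| }

/-- Operator norm of the integral operator `T_W`:
`sup_{‖φ‖_∞ ≤ 1} ∫₀¹ |∫₀¹ W(u,v) φ(v) dv| du`. -/
noncomputable def opNorm (W : ℝ → ℝ → ℝ) : ℝ :=
  sSup { x | ∃ φ : ℝ → ℝ, Measurable φ ∧ (∀ v, |φ v| ≤ 1) ∧
    x = ∫ u in Set.Icc (0:ℝ) 1, |∫ v in Set.Icc (0:ℝ) 1, W u v * φ v| }

private lemma volIcc : volume (Set.Icc (0:ℝ) 1) < ⊤ := by
  rw [Real.volume_Icc]; exact ENNReal.ofReal_lt_top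

private lemma volSub {S : Set ℝ} (h : S ⊆ Set.Icc 0 1) : volume S < ⊤ :=
  lt_of_le_of_lt (measure_mono h) volIcc

private lemma finRestrict {S : Set ℝ} (h : S ⊆ Set.Icc 0 1) :
    IsFiniteMeasure (volume.restrict S) :=
  ⟨by rw [Measure.restrict_apply_univ]; exact volSub h⟩

private lemma toReal_le_one {S : Set ℝ} (h : S ⊆ Set.Icc 0 1) :
    (volume S).toReal ≤ 1 := by
  have h1 : volume S ≤ 1 := by
    calc volume S ≤ volume (Set.Icc (0:ℝ) 1) := measure_mono h
    _ = 1 := by simp [Real.volume_Icc]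
  simpa using ENNReal.toReal_mono ENNReal.one_ne_top h1

private lemma intOn_bdd {h : ℝ → ℝ} {S : Set ℝ}
    (hm : AEStronglyMeasurable h (volume.restrict S))
    (hS : S ⊆ Set.Icc 0 1) {C : ℝ} (hb : ∀ x, |h x| ≤ C) :
    IntegrableOn h S := by
  haveI := finRestrict hS
  exact (integrable_const C).mono' hm (Filter.Eventually.of_forall
    (by simpa [Real.norm_eq_abs] using hb))

private lemma setIntegral_abs_le {h : ℝ → ℝ} {S : Set ℝ} (hS : S ⊆ Set.Icc 0 1)
    {C : ℝ} (hC : 0 ≤ C) (hb : ∀ x, |h x| ≤ C)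
    (hm : AEStronglyMeasurable h (volume.restrict S)) :
    |∫ x in S, h x| ≤ C := by
  have h1 := norm_setIntegral_le_of_norm_le_const_ae' (f := h) (volSub hS)
    (Filter.Eventually.of_forall fun x _ => by simpa [Real.norm_eq_abs] using hb x)
  calc |∫ x in S, h x| ≤ C * (volume S).toReal := by
        simpa [Real.norm_eq_abs, Measure.real] using h1
  _ ≤ C * 1 := mul_le_mul_of_nonneg_left (toReal_le_one hS) hC
  _ = C := mul_one C

private lemma swap_lemma {F : ℝ → ℝ → ℝ}
    (hF : Measurable (fun p : ℝ × ℝ => F p.1 p.2))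
    {C : ℝ} (hb : ∀ u v, |F u v| ≤ C) {A B : Set ℝ}
    (hA : A ⊆ Set.Icc 0 1) (hB : B ⊆ Set.Icc 0 1) :
    ∫ u in A, ∫ v in B, F u v = ∫ v in B, ∫ u in A, F u v := by
  haveI := finRestrict hA
  haveI := finRestrict hB
  apply integral_integral_swap
  refine (integrable_const C).mono' ?_ (Filter.Eventually.of_forall fun p => ?_)
  · exact hF.aestronglyMeasurable
  · simpa [Function.uncurry, Real.norm_eq_abs] using hb p.1 p.2

private lemma abs_integral_split {h : ℝ → ℝ} {S : Set ℝ} (hSm : MeasurableSet S)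
    (hS : S ⊆ Set.Icc 0 1) (hm : Measurable h) {C : ℝ} (hb : ∀ x, |h x| ≤ C)
    {c : ℝ} (key : ∀ A, MeasurableSet A → A ⊆ S → |∫ x in A, h x| ≤ c) :
    ∫ x in S, |h x| ≤ 2 * c := by
  set P : Set ℝ := {x | 0 ≤ h x} with hP
  have hPm : MeasurableSet P := measurableSet_le measurable_const hm
  have hib : IntegrableOn (fun x => |h x|) S :=
    intOn_bdd (hm.abs).aestronglyMeasurable hS (fun x => by simpa using hb x)
  have hsplit := integral_inter_add_diff (f := fun x => |h x|) (μ := volume)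
    (s := S) hPm hib
  have e1 : ∫ x in S ∩ P, |h x| = ∫ x in S ∩ P, h x :=
    setIntegral_congr_fun (hSm.inter hPm) (fun x hx => abs_of_nonneg hx.2)
  have e2 : ∫ x in S \ P, |h x| = ∫ x in S \ P, (-h x) :=
    setIntegral_congr_fun (hSm.diff hPm)
      (fun x hx => abs_of_neg (lt_of_not_ge hx.2))
  have k1 := key (S ∩ P) (hSm.inter hPm) Set.inter_subset_left
  have k2 := key (S \ P) (hSm.diff hPm) Set.diff_subset
  have : ∫ x in S, |h x| = (∫ x in S ∩ P, h x) + (∫ x in S \ P, (-h x)) := by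
    rw [← hsplit, e1, e2]
  rw [this, integral_neg]
  have b1 : ∫ x in S ∩ P, h x ≤ c := (le_abs_self _).trans k1
  have b2 : -∫ x in S \ P, h x ≤ c := (neg_le_abs _).trans k2
  linarith

theorem opNorm_le_four_mul_cutNorm (W : ℝ → ℝ → ℝ)
    (hmeas : Measurable (Function.uncurry W))
    (hsym : ∀ u v, W u v = W v u)
    (M : ℝ) (hbdd : ∀ u v, |W u v| ≤ M) :
    opNorm W ≤ 4 * cutNorm W := by
  have hM : (0:ℝ) ≤ M := (abs_nonneg _).trans (hbdd 0 0)
  set I : Set ℝ := Set.Icc 0 1 with hIdef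
  have hIm : MeasurableSet I := measurableSet_Icc
  have hIs : I ⊆ Set.Icc (0:ℝ) 1 := le_refl _
  -- the cut norm set and its boundedness
  set S : Set ℝ := { x | ∃ B₁ B₂ : Set ℝ, MeasurableSet B₁ ∧ MeasurableSet B₂ ∧
    B₁ ⊆ Set.Icc 0 1 ∧ B₂ ⊆ Set.Icc 0 1 ∧
    x = |∫ u in B₁, ∫ v in B₂, W u v| } with hSdef
  have hcut : cutNorm W = sSup S := rfl
  have hWsec : ∀ v, Measurable fun u => W u v := fun v =>
    hmeas.comp (measurable_id.prodMk measurable_const)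
  have hWsec' : ∀ u, Measurable fun v => W u v := fun u =>
    hmeas.comp (measurable_const.prodMk measurable_id)
  have hbddA : BddAbove S := by
    refine ⟨M, ?_⟩
    rintro x ⟨B₁, B₂, h1, h2, s1, s2, rfl⟩
    refine setIntegral_abs_le s1 hM (fun u => ?_) ?_
    · exact setIntegral_abs_le s2 hM (fun v => hbdd u v) (hWsec' u).aestronglyMeasurable
    · have : StronglyMeasurable fun u => ∫ v in B₂, W u v :=
        (hmeas.stronglyMeasurable).integral_prod_right'
      exact this.measurable.aestronglyMeasurable
  have hkey : ∀ C A : Set ℝ, MeasurableSet C → MeasurableSet A →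
      C ⊆ Set.Icc 0 1 → A ⊆ Set.Icc 0 1 →
      |∫ v in C, ∫ u in A, W u v| ≤ cutNorm W := by
    intro C A hCm hAm hCs hAs
    have e : ∀ v, (∫ u in A, W u v) = ∫ u in A, W v u := fun v =>
      integral_congr_ae (Filter.Eventually.of_forall fun u => hsym u v)
    have : |∫ v in C, ∫ u in A, W u v| = |∫ v in C, ∫ u in A, W v u| := by
      rw [integral_congr_ae (Filter.Eventually.of_forall fun v => e v)]
    rw [this, hcut]
    exact le_csSup hbddA ⟨C, A, hCm, hAm, hCs, hAs, rfl⟩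
  have hc0 : 0 ≤ cutNorm W := by
    rw [hcut]
    exact Real.sSup_nonneg fun x hx => by
      obtain ⟨B₁, B₂, _, _, _, _, rfl⟩ := hx; exact abs_nonneg _
  refine Real.sSup_le ?_ (by linarith)
  rintro x ⟨φ, hφm, hφb, rfl⟩
  set F : ℝ × ℝ → ℝ := fun p => W p.1 p.2 * φ p.2 with hFdef
  have hFm : Measurable F := hmeas.mul (hφm.comp measurable_snd)
  have hFb : ∀ u v, |W u v * φ v| ≤ M := fun u v => by
    rw [abs_mul]
    calc |W u v| * |φ v| ≤ M * 1 :=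
      mul_le_mul (hbdd u v) (hφb v) (abs_nonneg _) hM
    _ = M := mul_one M
  set f : ℝ → ℝ := fun u => ∫ v in I, W u v * φ v with hfdef
  have hfm : Measurable f := by
    have : StronglyMeasurable fun u => ∫ v in I, F (u, v) :=
      hFm.stronglyMeasurable.integral_prod_right'
    exact this.measurable
  have hfb : ∀ u, |f u| ≤ M := fun u =>
    setIntegral_abs_le hIs hM (fun v => hFb u v)
      (((hWsec' u).mul hφm).aestronglyMeasurable)
  -- key estimate
  have key2 : ∀ A, MeasurableSet A → A ⊆ I → |∫ u in A, f u| ≤ 2 * cutNorm W := by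
    intro A hAm hAs
    have hswap : ∫ u in A, f u = ∫ v in I, ∫ u in A, W u v * φ v :=
      swap_lemma (F := fun u v => W u v * φ v) hFm hFb hAs hIs
    set g : ℝ → ℝ := fun v => ∫ u in A, W u v with hgdef
    have hstep : ∀ v, (∫ u in A, W u v * φ v) = g v * φ v := fun v =>
      integral_mul_const (φ v) (fun u => W u v)
    have hgm : Measurable g := by
      have : StronglyMeasurable fun v => ∫ u in A, (fun p : ℝ × ℝ => W p.2 p.1) (v, u) :=
        ((hmeas.comp measurable_swap).stronglyMeasurable).integral_prod_right'
      exact this.measurable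
    have hgb : ∀ v, |g v| ≤ M := fun v =>
      setIntegral_abs_le hAs hM (fun u => hbdd u v) ((hWsec v).aestronglyMeasurable)
    have h1 : |∫ u in A, f u| = |∫ v in I, g v * φ v| := by
      rw [hswap, integral_congr_ae (Filter.Eventually.of_forall fun v => hstep v)]
    have h2 : |∫ v in I, g v * φ v| ≤ ∫ v in I, |g v * φ v| := by
      have := norm_integral_le_integral_norm (μ := volume.restrict I) (fun v => g v * φ v)
      simp only [Real.norm_eq_abs] at this
      exact this
    have h3 : ∫ v in I, |g v * φ v| ≤ ∫ v in I, |g v| := by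
      refine integral_mono ?_ ?_ ?_
      · exact intOn_bdd ((hgm.mul hφm).abs.aestronglyMeasurable) hIs
          (C := M) (fun v => by
            rw [abs_abs]
            calc |g v * φ v| ≤ |g v| * 1 := by
                  rw [abs_mul]
                  exact mul_le_mul_of_nonneg_left (hφb v) (abs_nonneg _)
            _ = |g v| := mul_one _
            _ ≤ M := hgb v)
      · exact intOn_bdd (hgm.abs.aestronglyMeasurable) hIs
          (C := M) (fun v => by rw [abs_abs]; exact hgb v)
      · intro v
        calc |g v * φ v| ≤ |g v| * 1 := by
              rw [abs_mul]
              exact mul_le_mul_of_nonneg_left (hφb v) (abs_nonneg _)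
        _ = |g v| := mul_one _
    have h4 : ∫ v in I, |g v| ≤ 2 * cutNorm W :=
      abs_integral_split hIm hIs hgm hgb
        (fun C hCm hCs => hkey C A hCm hAm (hCs.trans hIs) hAs)
    calc |∫ u in A, f u| = |∫ v in I, g v * φ v| := h1
      _ ≤ ∫ v in I, |g v * φ v| := h2
      _ ≤ ∫ v in I, |g v| := h3
      _ ≤ 2 * cutNorm W := h4
  have final : ∫ u in I, |f u| ≤ 2 * (2 * cutNorm W) :=
    abs_integral_split hIm hIs hfm hfb key2
  calc ∫ u in I, |f u| ≤ 2 * (2 * cutNorm W) := final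
    _ = 4 * cutNorm W := by ring
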